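/- The map d on pairs of functions from the naturals to the reals, defined by d(f,g) = limsup_{n→∞} of (exp(log|f(n) − g(n)| / log n) when f(n) ≠ g(n), and 0 when f(n) = g(n)), is a pseudometric with values in [0,∞]: for all f, g, h : ℕ → ℝ one has d(f,f) = 0, d(f,g) = d(g,f), and d(f,g) ≤ d(f,h) + d(g,h). -/

import Mathlib

open Filter

/-- The pseudometric of asymptotic exponent: `d(f,g)` is the `limsup` as `n → ∞` of
`exp (log |f n - g n| / log n)` when `f n ≠ g n`, and `0` when `f n = g n`,
taking values in the extended nonnegative reals. -/
noncomputable def pd (f g : ℕ → ℝ) : ENNReal :=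
  Filter.limsup
    (fun n : ℕ =>
      if f n = g n then 0
      else ENNReal.ofReal (Real.exp (Real.log |f n - g n| / Real.log n)))
    Filter.atTop

lemma my_limsup_add_le (v w : ℕ → ENNReal) :
    Filter.limsup (v + w) Filter.atTop ≤
      Filter.limsup v Filter.atTop + Filter.limsup w Filter.atTop := by
  by_cases hv : limsup v atTop = ⊤
  · simp [hv]
  by_cases hw : limsup w atTop = ⊤
  · simp [hw]
  refine ENNReal.le_of_forall_pos_le_add fun ε hε _ => ?_
  have h2 : ((ε : ENNReal) / 2) ≠ 0 := by
    simp [ENNReal.div_eq_zero_iff, hε.ne']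
  have hv' : limsup v atTop < limsup v atTop + ε / 2 := ENNReal.lt_add_right hv h2
  have hw' : limsup w atTop < limsup w atTop + ε / 2 := ENNReal.lt_add_right hw h2
  refine limsup_le_of_le (by isBoundedDefault) ?_
  filter_upwards [eventually_lt_of_limsup_lt hv', eventually_lt_of_limsup_lt hw'] with n h1 h2'
  calc v n + w n ≤ (limsup v atTop + ε / 2) + (limsup w atTop + ε / 2) :=
        add_le_add h1.le h2'.le
    _ = limsup v atTop + limsup w atTop + ((ε : ENNReal) / 2 + ε / 2) := by
        rw [add_add_add_comm]
    _ = limsup v atTop + limsup w atTop + ε := by rw [ENNReal.add_halves]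

set_option maxHeartbeats 1000000 in
/-- `pd` is a pseudometric: reflexivity, symmetry and the triangle inequality. -/
theorem pd_isPseudometric (f g h : ℕ → ℝ) :
    pd f f = 0 ∧ pd f g = pd g f ∧ pd f g ≤ pd f h + pd g h := by
  refine ⟨?_, ?_, ?_⟩
  · simp [pd]
  · unfold pd
    congr 1
    funext n
    rcases eq_or_ne (f n) (g n) with hfg | hfg
    · simp [hfg]
    · simp [hfg, Ne.symm hfg, abs_sub_comm (f n) (g n)]
  · -- triangle inequality
    set c : ℕ → ENNReal := fun n => ENNReal.ofReal (Real.exp (Real.log 2 / Real.log n)) with hc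
    set u : ℕ → ENNReal := fun n =>
      if f n = g n then 0
      else ENNReal.ofReal (Real.exp (Real.log |f n - g n| / Real.log n)) with hu
    set v : ℕ → ENNReal := fun n =>
      if f n = h n then 0
      else ENNReal.ofReal (Real.exp (Real.log |f n - h n| / Real.log n)) with hv
    set w : ℕ → ENNReal := fun n =>
      if g n = h n then 0
      else ENNReal.ofReal (Real.exp (Real.log |g n - h n| / Real.log n)) with hw
    have hctend : Tendsto c atTop (nhds 1) := by
      have h1 : Tendsto (fun n : ℕ => Real.log n) atTop atTop :=
        Real.tendsto_log_atTop.comp tendsto_natCast_atTop_atTop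
      have h2 : Tendsto (fun n : ℕ => Real.log 2 / Real.log n) atTop (nhds 0) :=
        tendsto_const_nhds.div_atTop h1
      have h3 : Tendsto (fun n : ℕ => Real.exp (Real.log 2 / Real.log n)) atTop (nhds 1) := by
        simpa [Function.comp_def] using (Real.continuous_exp.tendsto 0).comp h2
      simpa [Function.comp_def, hc] using (ENNReal.continuous_ofReal.tendsto 1).comp h3
    have hclim : limsup c atTop = 1 := hctend.limsup_eq
    have key : ∀ᶠ n in atTop, u n ≤ (c * (v + w)) n := by
      filter_upwards [eventually_ge_atTop 2] with n hn
      have hlogn : 0 < Real.log n := by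
        apply Real.log_pos
        exact_mod_cast by omega
      have hc1 : (1 : ENNReal) ≤ c n := by
        rw [hc]
        simp only
        rw [show (1:ENNReal) = ENNReal.ofReal 1 by simp]
        apply ENNReal.ofReal_le_ofReal
        rw [show (1:ℝ) = Real.exp 0 by simp]
        apply Real.exp_le_exp.2
        positivity
      simp only [Pi.mul_apply, Pi.add_apply]
      rcases eq_or_ne (f n) (g n) with hfg | hfg
      · simp [hu, hfg]
      rcases eq_or_ne (f n) (h n) with hfh | hfh
      · -- u n = w n
        have hgh : g n ≠ h n := fun e => hfg (hfh.trans e.symm)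
        have : u n = w n := by
          simp only [hu, hw, if_neg hfg, if_neg hgh]
          rw [show |f n - g n| = |g n - h n| by rw [← hfh, abs_sub_comm]]
        rw [this]
        calc w n = 1 * w n := (one_mul _).symm
          _ ≤ c n * (v n + w n) := by
              exact mul_le_mul' hc1 (le_add_self)
      rcases eq_or_ne (g n) (h n) with hgh | hgh
      · have : u n = v n := by
          simp only [hu, hv, if_neg hfg, if_neg hfh]
          rw [show |f n - g n| = |f n - h n| by rw [hgh]]
        rw [this]
        calc v n = 1 * v n := (one_mul _).symm
          _ ≤ c n * (v n + w n) := mul_le_mul' hc1 (le_self_add)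
      · -- main case
        have hfg0 : 0 < |f n - g n| := abs_pos.2 (sub_ne_zero.2 hfg)
        have hfh0 : 0 < |f n - h n| := abs_pos.2 (sub_ne_zero.2 hfh)
        have hgh0 : 0 < |g n - h n| := abs_pos.2 (sub_ne_zero.2 hgh)
        set M : ℝ := max |f n - h n| |g n - h n| with hM
        have hM0 : 0 < M := lt_max_of_lt_left hfh0
        have hle : |f n - g n| ≤ 2 * M := by
          calc |f n - g n| ≤ |f n - h n| + |h n - g n| := abs_sub_le _ _ _
            _ = |f n - h n| + |g n - h n| := by rw [abs_sub_comm (h n)]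
            _ ≤ M + M := add_le_add (le_max_left _ _) (le_max_right _ _)
            _ = 2 * M := (two_mul M).symm
        have hlog : Real.log |f n - g n| ≤ Real.log 2 + Real.log M := by
          rw [← Real.log_mul (by norm_num) hM0.ne']
          exact Real.log_le_log hfg0 hle
        have hdiv : Real.log |f n - g n| / Real.log n
            ≤ Real.log 2 / Real.log n + Real.log M / Real.log n := by
          rw [← add_div]
          gcongr
        have hexp : Real.exp (Real.log |f n - g n| / Real.log n)
            ≤ Real.exp (Real.log 2 / Real.log n) *
              (Real.exp (Real.log |f n - h n| / Real.log n) +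
               Real.exp (Real.log |g n - h n| / Real.log n)) := by
          calc Real.exp (Real.log |f n - g n| / Real.log n)
              ≤ Real.exp (Real.log 2 / Real.log n + Real.log M / Real.log n) :=
                Real.exp_le_exp.2 hdiv
            _ = Real.exp (Real.log 2 / Real.log n) * Real.exp (Real.log M / Real.log n) :=
                Real.exp_add _ _
            _ ≤ _ := by
                apply mul_le_mul_of_nonneg_left _ (Real.exp_nonneg _)
                rcases le_total |f n - h n| |g n - h n| with hle' | hle'
                · rw [hM, max_eq_right hle']
                  exact le_add_of_nonneg_left (Real.exp_nonneg _)
                · rw [hM, max_eq_left hle']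
                  exact le_add_of_nonneg_right (Real.exp_nonneg _)
        simp only [hu, hv, hw, if_neg hfg, if_neg hfh, if_neg hgh, hc]
        calc ENNReal.ofReal (Real.exp (Real.log |f n - g n| / Real.log n))
            ≤ ENNReal.ofReal (Real.exp (Real.log 2 / Real.log n) *
              (Real.exp (Real.log |f n - h n| / Real.log n) +
               Real.exp (Real.log |g n - h n| / Real.log n))) :=
              ENNReal.ofReal_le_ofReal hexp
          _ = _ := by
              rw [ENNReal.ofReal_mul (Real.exp_nonneg _),
                ENNReal.ofReal_add (Real.exp_nonneg _) (Real.exp_nonneg _)]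
    have step1 : pd f g ≤ limsup (c * (v + w)) atTop := limsup_le_limsup key
    have step2 : limsup (c * (v + w)) atTop ≤ limsup c atTop * limsup (v + w) atTop := by
      apply ENNReal.limsup_mul_le'
      · left; rw [hclim]; exact one_ne_zero
      · left; rw [hclim]; exact ENNReal.one_ne_top
    have step3 : limsup (v + w) atTop ≤ limsup v atTop + limsup w atTop :=
      my_limsup_add_le v w
    calc pd f g ≤ limsup c atTop * limsup (v + w) atTop := step1.trans step2
      _ = limsup (v + w) atTop := by rw [hclim, one_mul]
      _ ≤ pd f h + pd g h := step3
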